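/- Suppose the bounding number 𝔟 equals ω₁. Let ⟨A_n : n < ω⟩ be a sequence of subsets of ω such that A_n ⊆ A_{n+1}, A_{n+1} \ A_n is infinite for each n, and ⋃_n A_n = ω. Then there exists a sequence ⟨X_α : α < ω₁⟩ of subsets of ω such that for all α < β < ω₁: (1) X_α ⊆* X_β (inclusion mod finite); (2) X_α ∩ A_n is finite for every n < ω; and (3) for any fixed <*-increasing unbounded family ⟨σ_α : α < ω₁⟩ in ω→ω, the set X_{α+1} ∩ (A_{n+1} \ (A_n ∪ σ_α(n+1))) is nonempty for every n < ω. -/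

import Mathlib

open Cardinal Ordinal

/-- `u <* v`: eventual strict domination on `ℕ → ℕ`. -/
def ltStarN (u v : ℕ → ℕ) : Prop := {n | v n ≤ u n}.Finite

/-- The bounding number 𝔟: least size of an unbounded family in (ω→ω, <*). -/
noncomputable def boundingNumber : Cardinal.{0} :=
  sInf {c | ∃ F : Set (ℕ → ℕ), #F = c ∧ ∀ g : ℕ → ℕ, ∃ f ∈ F, ¬ ltStarN f g}

universe u

open Classical in
/-- A fixed enumeration of the ordinals below `α` (when `α` is countable). -/
noncomputable def enumBelow (α : Ordinal.{u}) : ℕ → Ordinal.{u} :=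
  if h : ∃ f : ℕ → Ordinal.{u}, ∀ γ < α, ∃ i, f i = γ then h.choose else fun _ => 0

lemma enumBelow_surj {α : Ordinal.{u}} (hα : α < (aleph 1).ord) (h0 : 0 < α) :
    ∀ γ < α, ∃ i, enumBelow α i = γ := by
  have hcnt : Countable (Set.Iio α) := by
    rw [← Cardinal.mk_le_aleph0_iff, Ordinal.mk_Iio_ordinal]
    have h1 : α.card < aleph 1 := Cardinal.lt_ord.1 hα
    have h2 : α.card ≤ ℵ₀ := by
      rwa [← Cardinal.succ_aleph0, Order.lt_succ_iff] at h1
    simpa using Cardinal.lift_le.2 h2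
  have hne : Nonempty (Set.Iio α) := ⟨⟨0, h0⟩⟩
  obtain ⟨g, hg⟩ := exists_surjective_nat (Set.Iio α)
  have hex : ∃ f : ℕ → Ordinal.{u}, ∀ γ < α, ∃ i, f i = γ := by
    refine ⟨fun i => (g i).1, fun γ hγ => ?_⟩
    obtain ⟨i, hi⟩ := hg ⟨γ, hγ⟩
    exact ⟨i, congrArg Subtype.val hi⟩
  intro γ hγ
  rw [enumBelow, dif_pos hex]
  exact hex.choose_spec γ hγ

/-- The threshold functions, built by transfinite recursion from `p`. -/
noncomputable def tauF (p : Ordinal.{u} → ℕ → ℕ) (α : Ordinal.{u}) : ℕ → ℕ :=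
  Ordinal.limitRecOn α (fun _ => 0)
    (fun β t n => max (t n) (p β n + 1))
    (fun α _ ih n => (Finset.range (n + 1)).sup
      (fun i => if hi : enumBelow α i < α then ih (enumBelow α i) hi n else 0))

lemma tauF_succ (p : Ordinal.{u} → ℕ → ℕ) (β : Ordinal.{u}) (n : ℕ) :
    tauF p (Order.succ β) n = max (tauF p β n) (p β n + 1) := by
  rw [tauF, Ordinal.limitRecOn_succ]; rfl

lemma tauF_limit (p : Ordinal.{u} → ℕ → ℕ) {α : Ordinal.{u}} (hα : Order.IsSuccLimit α) (n : ℕ) :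
    tauF p α n = (Finset.range (n + 1)).sup
      (fun i => if hi : enumBelow α i < α then tauF p (enumBelow α i) n else 0) := by
  rw [tauF, Ordinal.limitRecOn_limit _ _ _ _ hα]
  rfl

/-- The chain property: below ω₁, the `tauF` family is ≤ mod finite. -/
lemma tauF_chain (p : Ordinal.{u} → ℕ → ℕ) :
    ∀ α, α < (aleph 1).ord → ∀ γ < α, {n | tauF p α n < tauF p γ n}.Finite := by
  intro α
  induction α using Ordinal.induction with
  | h α IH =>
    intro hα γ hγ
    rcases Ordinal.zero_or_succ_or_isSuccLimit α with h0 | ⟨β, rfl⟩ | hlim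
    · exact absurd hγ (by simp [h0])
    · have hstep : ∀ n, tauF p β n ≤ tauF p (Order.succ β) n := fun n => by
        rw [tauF_succ]; exact le_max_left _ _
      rcases lt_or_eq_of_le (Order.lt_succ_iff.1 hγ) with h | rfl
      · refine ((IH β (Order.lt_succ β) (lt_trans (Order.lt_succ β) hα) γ h).subset ?_)
        intro n hn
        exact lt_of_le_of_lt (hstep n) hn
      · convert Set.finite_empty
        ext n
        simp only [Set.mem_setOf_eq, Set.mem_empty_iff_false, iff_false, not_lt]
        exact hstep n
    · obtain ⟨i, hi⟩ := enumBelow_surj hα hlim.pos γ hγ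
      refine (Set.finite_Iio i).subset ?_
      intro n hn
      simp only [Set.mem_setOf_eq] at hn
      by_contra hni
      have hle : i ≤ n := not_lt.1 (by simpa using hni)
      have hin : i ∈ Finset.range (n + 1) := Finset.mem_range.2 (by omega)
      have hγα : enumBelow α i < α := hi ▸ hγ
      have : tauF p γ n ≤ tauF p α n := by
        rw [tauF_limit p hlim n]
        have h := Finset.le_sup (f := fun i => if hi : enumBelow α i < α then
          tauF p (enumBelow α i) n else 0) hin
        have heq : (fun j => if hj : enumBelow α j < α then tauF p (enumBelow α j) n else 0) i
            = tauF p γ n := by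
          show (if hj : enumBelow α i < α then tauF p (enumBelow α i) n else 0) = tauF p γ n
          rw [dif_pos hγα, hi]
        exact le_trans (le_of_eq heq.symm) h
      exact absurd hn (not_lt.2 this)

theorem stmt_4 (hb : boundingNumber = aleph 1)
    (A : ℕ → Set ℕ) (hmono : ∀ n, A n ⊆ A (n + 1))
    (hinf : ∀ n, (A (n + 1) \ A n).Infinite)
    (hcover : (⋃ n, A n) = Set.univ)
    (σ : Ordinal → (ℕ → ℕ))
    (hσinc : ∀ α < (aleph 1).ord, ∀ β < (aleph 1).ord, α < β → ltStarN (σ α) (σ β))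
    (hσunb : ∀ τ : ℕ → ℕ, ∃ α < (aleph 1).ord, ¬ ltStarN (σ α) τ) :
    ∃ X : Ordinal → Set ℕ,
      (∀ α < (aleph 1).ord, ∀ β < (aleph 1).ord, α < β → (X α \ X β).Finite) ∧
      (∀ α < (aleph 1).ord, ∀ n, (X α ∩ A n).Finite) ∧
      (∀ α < (aleph 1).ord, ∀ n,
        (X (α + 1) ∩ {m | m ∈ A (n + 1) ∧ m ∉ A n ∧ σ α (n + 1) ≤ m}).Nonempty) := by
  classical
  have hA : ∀ {n k : ℕ}, n ≤ k → A n ⊆ A k := by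
    intro n k h
    induction k with
    | zero => simp [Nat.le_zero.1 h]
    | succ k ih =>
      rcases Nat.lt_or_ge n (k+1) with h' | h'
      · exact (ih (Nat.lt_succ_iff.1 h')).trans (hmono k)
      · have : n = k + 1 := le_antisymm h h'
        simp [this]
  have hW : ∀ (α : Ordinal) (n : ℕ), ∃ m, m ∈ A (n+1) ∧ m ∉ A n ∧ σ α (n+1) ≤ m := by
    intro α n
    obtain ⟨m, hm⟩ := ((hinf n).diff (Set.finite_Iio (σ α (n+1)))).nonempty
    exact ⟨m, hm.1.1, hm.1.2, not_lt.1 hm.2⟩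
  let w : Ordinal → ℕ → ℕ := fun α n => (hW α n).choose
  let p : Ordinal → ℕ → ℕ := fun α n => w α n + 1
  let τ : Ordinal → ℕ → ℕ := tauF p
  refine ⟨fun α => {m | ∃ n, m ∈ A (n+1) ∧ m ∉ A n ∧ m < τ α n}, ?_, ?_, ?_⟩
  · intro α hα β hβ hab
    have hE : {n | τ β n < τ α n}.Finite := tauF_chain p β hβ α hab
    refine (hE.biUnion (fun k _ => Set.finite_Iio (τ α k))).subset ?_
    rintro m ⟨⟨k, h1, h2, h3⟩, hm2⟩
    have hk : ¬ m < τ β k := fun hc => hm2 ⟨k, h1, h2, hc⟩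
    exact Set.mem_biUnion (lt_of_le_of_lt (not_lt.1 hk) h3) h3
  · intro α hα n
    refine (Set.finite_Iio ((Finset.range n).sup (fun k => τ α k))).subset ?_
    rintro m ⟨⟨k, h1, h2, h3⟩, hm2⟩
    have hkn : k < n := by
      by_contra h
      exact h2 (hA (not_lt.1 h) hm2)
    exact lt_of_lt_of_le h3 (Finset.le_sup (Finset.mem_range.2 hkn))
  · intro α hα n
    have hsucc : τ (α + 1) n = max (τ α n) (p α n + 1) := by
      show tauF p (α + 1) n = _
      rw [Ordinal.add_one_eq_succ, tauF_succ]
    have hwlt : w α n < τ (α + 1) n := by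
      rw [hsucc]
      have : w α n < p α n + 1 := by simp only [p]; omega
      exact lt_of_lt_of_le this (le_max_right _ _)
    exact ⟨w α n, ⟨n, (hW α n).choose_spec.1, (hW α n).choose_spec.2.1, hwlt⟩,
      (hW α n).choose_spec.1, (hW α n).choose_spec.2.1, (hW α n).choose_spec.2.2⟩
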